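/- Let A, D, I be events on a probability space with D ⊆ A, P(D) > 0, and P(A) < 1. Suppose D and I are conditionally independent given A (i.e., P(I ∩ D | A) = P(I | A)·P(D | A)), and that P(I | A) > P(I | Aᶜ). Then P(I | D) = P(I | A) > P(I); in particular, D and I are not independent. -/

import Mathlib

open MeasureTheory ProbabilityTheory

/-- Example 3, once-per-period testing violates MITI: if only individuals
in `A` are eligible for testing (`D ⊆ A`), testing and infectiousness are conditionally
independent given `A`, and infection is more likely on `A` than on `Aᶜ`, then
`P(I | D) = P(I | A) > P(I)`; in particular `D` and `I` are not independent. -/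
theorem stmt9
    {Ω : Type*} [MeasurableSpace Ω] (μ : Measure Ω) [IsProbabilityMeasure μ]
    (A D I : Set Ω)
    (hA : MeasurableSet A) (hD : MeasurableSet D) (hI : MeasurableSet I)
    (hDA : D ⊆ A)
    (hDpos : 0 < μ D) (hAlt : μ A < 1)
    (hciA : μ[|A] (I ∩ D) = μ[|A] I * μ[|A] D)
    (hIA : μ[|Aᶜ] I < μ[|A] I) :
    μ[|D] I = μ[|A] I ∧ μ I < μ[|D] I ∧ μ (I ∩ D) ≠ μ I * μ D := by
  set a := μ A with ha_def
  set d := μ D with hd_def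
  set x := μ (I ∩ D) with hx_def
  set y := μ (A ∩ I) with hy_def
  set z := μ (Aᶜ ∩ I) with hz_def
  have hane : a ≠ 0 := (lt_of_lt_of_le hDpos (measure_mono hDA)).ne'
  have hafin : a ≠ ⊤ := measure_ne_top μ A
  have hdne : d ≠ 0 := hDpos.ne'
  have hdfin : d ≠ ⊤ := measure_ne_top μ D
  have hyfin : y ≠ ⊤ := measure_ne_top μ _
  have hxfin : x ≠ ⊤ := measure_ne_top μ _
  have hcne : μ Aᶜ ≠ 0 := by
    have : μ Aᶜ = 1 - a := by
      rw [measure_compl hA hafin, measure_univ]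
    rw [this]
    exact (tsub_pos_iff_lt.mpr hAlt).ne'
  have hcfin : μ Aᶜ ≠ ⊤ := measure_ne_top μ _
  have hAD : A ∩ D = D := Set.inter_eq_self_of_subset_right hDA
  have hAID : A ∩ (I ∩ D) = I ∩ D :=
    Set.inter_eq_self_of_subset_right (fun ω hω => hDA hω.2)
  rw [cond_apply hA, cond_apply hA, cond_apply hA, hAD, hAID] at hciA
  -- hciA : a⁻¹ * x = (a⁻¹ * y) * (a⁻¹ * d)
  have h1 : x = a⁻¹ * y * d := by
    calc x = a * a⁻¹ * x := by rw [ENNReal.mul_inv_cancel hane hafin, one_mul]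
    _ = a * (a⁻¹ * x) := by ring
    _ = a * (a⁻¹ * y * (a⁻¹ * d)) := by rw [hciA]
    _ = (a * a⁻¹) * (a⁻¹ * y * d) := by ring
    _ = a⁻¹ * y * d := by rw [ENNReal.mul_inv_cancel hane hafin, one_mul]
  have goal1 : μ[|D] I = μ[|A] I := by
    rw [cond_apply hD, cond_apply hA, Set.inter_comm D I, ← hx_def, h1]
    calc d⁻¹ * (a⁻¹ * y * d) = (d * d⁻¹) * (a⁻¹ * y) := by ring
    _ = a⁻¹ * y := by rw [ENNReal.mul_inv_cancel hdne hdfin, one_mul]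
  have hIsplit : y + z = μ I := by
    have h := measure_inter_add_diff (μ := μ) I hA
    rw [Set.diff_eq_compl_inter] at h
    rw [hy_def, hz_def, Set.inter_comm A I]
    exact h
  rw [cond_apply hA, cond_apply hA.compl] at hIA
  -- hIA : (μ Aᶜ)⁻¹ * z < a⁻¹ * y
  have hy : y = a * (a⁻¹ * y) := by
    rw [← mul_assoc, ENNReal.mul_inv_cancel hane hafin, one_mul]
  have hz : z = μ Aᶜ * ((μ Aᶜ)⁻¹ * z) := by
    rw [← mul_assoc, ENNReal.mul_inv_cancel hcne hcfin, one_mul]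
  have goal2 : μ I < μ[|D] I := by
    rw [goal1, cond_apply hA]
    calc μ I = y + z := hIsplit.symm
    _ = a * (a⁻¹ * y) + μ Aᶜ * ((μ Aᶜ)⁻¹ * z) := by rw [← hy, ← hz]
    _ < a * (a⁻¹ * y) + μ Aᶜ * (a⁻¹ * y) := by
        refine ENNReal.add_lt_add_left ?_ ?_
        · exact ENNReal.mul_ne_top hafin
            (ENNReal.mul_ne_top (ENNReal.inv_ne_top.mpr hane) hyfin)
        · exact (ENNReal.mul_lt_mul_iff_right hcne hcfin).mpr hIA
    _ = (a + μ Aᶜ) * (a⁻¹ * y) := by ring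
    _ = a⁻¹ * y := by
        rw [measure_add_measure_compl hA, measure_univ, one_mul]
  refine ⟨goal1, goal2, fun hcontra => ?_⟩
  have : μ[|D] I = μ I := by
    rw [cond_apply hD, Set.inter_comm D I, ← hx_def, hcontra]
    calc d⁻¹ * (μ I * d) = (d * d⁻¹) * μ I := by ring
    _ = μ I := by rw [ENNReal.mul_inv_cancel hdne hdfin, one_mul]
  exact absurd (this ▸ goal2) (lt_irrefl _)
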